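/- Let G be a finite abelian group of order q, Y a finite set, and W a channel (G, Y, W). Let d₁, d₂ ∈ G and ε > 0. If Z_{d₁}(W) > 1 − ε and Z_{d₂}(W) > 1 − ε, then for every d̃ ∈ ⟨d₁, d₂⟩ (the subgroup of G generated by d₁ and d₂), Z_{d̃}(W) ≥ 1 − 4q³ε. -/

import Mathlib

open Finset

/-- Bhattacharyya distance between two input symbols:
`Z(W_{x,x̃}) = Σ_y √(W(y|x)·W(y|x̃))`. -/
noncomputable def Zpair {G Y : Type} [Fintype Y] (W : G → Y → ℝ) (x x' : G) : ℝ :=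
  ∑ y : Y, Real.sqrt (W x y * W x' y)

/-- `Z_d(W) = (1/q)·Σ_{x∈G} Z(W_{x,x+d})`. -/
noncomputable def Zd {G Y : Type} [Fintype G] [Fintype Y] [Add G]
    (W : G → Y → ℝ) (d : G) : ℝ :=
  (1 / (Fintype.card G : ℝ)) * ∑ x : G, Zpair W x (x + d)

section Aux

variable {G Y : Type} [Fintype G] [AddCommGroup G] [Fintype Y]

/-- The square-root embedding, shifted by `d`. -/
noncomputable def PsiW (W : G → Y → ℝ) (d : G) : EuclideanSpace ℝ (G × Y) :=
  WithLp.toLp 2 (fun p : G × Y => Real.sqrt (W (p.1 + d) p.2))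

lemma normsq_PsiW (W : G → Y → ℝ) (d e : G) :
    ‖PsiW W d - PsiW W e‖ ^ 2 =
      ∑ p : G × Y, (Real.sqrt (W (p.1 + d) p.2) - Real.sqrt (W (p.1 + e) p.2)) ^ 2 := by
  rw [EuclideanSpace.norm_eq, Real.sq_sqrt (by positivity)]
  refine Finset.sum_congr rfl fun p _ => ?_
  simp [PsiW, Real.norm_eq_abs, sq_abs]

lemma norm_PsiW_shift (W : G → Y → ℝ) (c d e : G) :
    ‖PsiW W (c + d) - PsiW W (c + e)‖ = ‖PsiW W d - PsiW W e‖ := by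
  have h : ‖PsiW W (c + d) - PsiW W (c + e)‖ ^ 2 = ‖PsiW W d - PsiW W e‖ ^ 2 := by
    rw [normsq_PsiW, normsq_PsiW]
    refine Fintype.sum_equiv (Equiv.prodCongr (Equiv.addRight c) (Equiv.refl Y)) _ _
      fun p => ?_
    simp [add_assoc, add_comm, add_left_comm]
  have h2 := congrArg Real.sqrt h
  rwa [Real.sqrt_sq (norm_nonneg _), Real.sqrt_sq (norm_nonneg _)] at h2

/-- `N(d) = ‖Ψ₀ − Ψ_d‖`. -/
noncomputable def NW (W : G → Y → ℝ) (d : G) : ℝ := ‖PsiW W 0 - PsiW W d‖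

lemma NW_nonneg (W : G → Y → ℝ) (d : G) : 0 ≤ NW W d := norm_nonneg _

lemma NW_zero (W : G → Y → ℝ) : NW W 0 = 0 := by simp [NW]

lemma NW_add_le (W : G → Y → ℝ) (d e : G) : NW W (d + e) ≤ NW W d + NW W e := by
  have h1 : ‖PsiW W d - PsiW W (d + e)‖ = NW W e := by
    have := norm_PsiW_shift W d 0 e
    rw [add_zero] at this
    rw [this]; rfl
  calc ‖PsiW W 0 - PsiW W (d + e)‖
      ≤ ‖PsiW W 0 - PsiW W d‖ + ‖PsiW W d - PsiW W (d + e)‖ := norm_sub_le_norm_sub_add_norm_sub _ _ _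
    _ = NW W d + NW W e := by rw [h1]; rfl

lemma NW_nsmul_le (W : G → Y → ℝ) (d : G) (n : ℕ) : NW W (n • d) ≤ n * NW W d := by
  induction n with
  | zero => simp [NW_zero]
  | succ k ih =>
      rw [succ_nsmul]
      calc NW W (k • d + d) ≤ NW W (k • d) + NW W d := NW_add_le W _ _
        _ ≤ k * NW W d + NW W d := by linarith
        _ = (k + 1 : ℕ) * NW W d := by push_cast; ring

/-- The key relation between `N` and `Zd`. -/
lemma NW_sq (W : G → Y → ℝ) (hW0 : ∀ x y, 0 ≤ W x y) (hW1 : ∀ x, ∑ y, W x y = 1) (d : G) :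
    NW W d ^ 2 = 2 * (Fintype.card G : ℝ) * (1 - Zd W d) := by
  have hq : (0 : ℝ) < (Fintype.card G : ℝ) := by
    exact_mod_cast Fintype.card_pos
  have key : ∀ x : G, ∑ y : Y, (Real.sqrt (W x y) - Real.sqrt (W (x + d) y)) ^ 2
      = 2 - 2 * Zpair W x (x + d) := by
    intro x
    have e1 : ∀ y, (Real.sqrt (W x y) - Real.sqrt (W (x + d) y)) ^ 2
        = W x y + W (x + d) y - 2 * Real.sqrt (W x y * W (x + d) y) := by
      intro y
      rw [sub_sq, Real.sq_sqrt (hW0 x y), Real.sq_sqrt (hW0 (x + d) y),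
        Real.sqrt_mul (hW0 x y)]
      ring
    rw [Finset.sum_congr rfl fun y _ => e1 y]
    rw [Finset.sum_sub_distrib, Finset.sum_add_distrib, hW1, hW1, ← Finset.mul_sum]
    rw [Zpair]; ring
  rw [NW, normsq_PsiW]
  rw [Fintype.sum_prod_type]
  simp only [add_zero]
  have : ∑ x : G, ∑ y : Y, (Real.sqrt (W x y) - Real.sqrt (W (x + d) y)) ^ 2
      = ∑ x : G, (2 - 2 * Zpair W x (x + d)) := Finset.sum_congr rfl fun x _ => key x
  rw [this, Finset.sum_sub_distrib]
  have hsum : ∑ x : G, Zpair W x (x + d) = (Fintype.card G : ℝ) * Zd W d := by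
    rw [Zd]; field_simp
  rw [← Finset.mul_sum, hsum]
  simp [Finset.card_univ]
  ring

end Aux

/-- if `Z_{d₁}(W) > 1 − ε` and `Z_{d₂}(W) > 1 − ε` then
`Z_{d̃}(W) ≥ 1 − 4q³ε` for every `d̃` in the subgroup generated by `d₁` and `d₂`. -/
theorem Zd_high_on_generated_subgroup
    {G Y : Type} [Fintype G] [AddCommGroup G] [Fintype Y]
    (W : G → Y → ℝ) (hW0 : ∀ x y, 0 ≤ W x y) (hW1 : ∀ x, ∑ y, W x y = 1)
    (d₁ d₂ : G) (ε : ℝ) (hε : 0 < ε)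
    (hZ1 : Zd W d₁ > 1 - ε) (hZ2 : Zd W d₂ > 1 - ε)
    (d' : G) (hd' : d' ∈ AddSubgroup.closure ({d₁, d₂} : Set G)) :
    Zd W d' ≥ 1 - 4 * (Fintype.card G : ℝ) ^ 3 * ε := by
  classical
  set q : ℝ := (Fintype.card G : ℝ) with hqdef
  have hq1 : (1 : ℝ) ≤ q := by
    have h1 : (1 : ℕ) ≤ Fintype.card G := Fintype.card_pos
    rw [hqdef]; exact_mod_cast h1
  have hq0 : (0 : ℝ) < q := lt_of_lt_of_le one_pos hq1
  obtain ⟨m, n, rfl⟩ := AddSubgroup.mem_closure_pair.mp hd'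
  -- reduce integer coefficients mod the additive orders
  have reduce : ∀ (c : G) (z : ℤ), ∃ a : ℕ, (a : ℝ) ≤ q ∧ (a : ℤ) • c = z • c := by
    intro c z
    have hpos : 0 < addOrderOf c := addOrderOf_pos c
    refine ⟨(z % (addOrderOf c : ℤ)).toNat, ?_, ?_⟩
    · have h1 : z % (addOrderOf c : ℤ) < (addOrderOf c : ℤ) :=
        Int.emod_lt_of_pos z (by exact_mod_cast hpos)
      have h2 : (z % (addOrderOf c : ℤ)).toNat < addOrderOf c := by omega
      have h3 : addOrderOf c ≤ Fintype.card G := addOrderOf_le_card_univ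
      have h4 : ((z % (addOrderOf c : ℤ)).toNat : ℕ) ≤ Fintype.card G := by omega
      rw [hqdef]; exact_mod_cast h4
    · have h0 : 0 ≤ z % (addOrderOf c : ℤ) := Int.emod_nonneg z (by exact_mod_cast hpos.ne')
      rw [Int.toNat_of_nonneg h0]
      exact mod_addOrderOf_zsmul c z
  obtain ⟨a, ha, hazsmul⟩ := reduce d₁ m
  obtain ⟨b, hb, hbzsmul⟩ := reduce d₂ n
  -- bounds on N from the hypotheses
  have hNsq1 : NW W d₁ ^ 2 ≤ 2 * q * ε := by
    rw [NW_sq W hW0 hW1]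
    have : 1 - Zd W d₁ ≤ ε := by linarith
    nlinarith
  have hNsq2 : NW W d₂ ^ 2 ≤ 2 * q * ε := by
    rw [NW_sq W hW0 hW1]
    have : 1 - Zd W d₂ ≤ ε := by linarith
    nlinarith
  have hN1 : NW W d₁ ≤ Real.sqrt (2 * q * ε) := by
    rw [← Real.sqrt_sq (NW_nonneg W d₁)]
    exact Real.sqrt_le_sqrt hNsq1
  have hN2 : NW W d₂ ≤ Real.sqrt (2 * q * ε) := by
    rw [← Real.sqrt_sq (NW_nonneg W d₂)]
    exact Real.sqrt_le_sqrt hNsq2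
  -- bound N of the combination
  have hsplit : NW W (m • d₁ + n • d₂) ≤ NW W (a • d₁) + NW W (b • d₂) := by
    have e1 : (a : ℕ) • d₁ = m • d₁ := by
      rw [← hazsmul]; simp [natCast_zsmul]
    have e2 : (b : ℕ) • d₂ = n • d₂ := by
      rw [← hbzsmul]; simp [natCast_zsmul]
    rw [← e1, ← e2]
    exact NW_add_le W _ _
  have hNa : NW W (a • d₁) ≤ q * Real.sqrt (2 * q * ε) := by
    calc NW W (a • d₁) ≤ (a : ℝ) * NW W d₁ := NW_nsmul_le W d₁ a
      _ ≤ q * Real.sqrt (2 * q * ε) := by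
          apply mul_le_mul ha hN1 (NW_nonneg W d₁) (le_of_lt hq0)
  have hNb : NW W (b • d₂) ≤ q * Real.sqrt (2 * q * ε) := by
    calc NW W (b • d₂) ≤ (b : ℝ) * NW W d₂ := NW_nsmul_le W d₂ b
      _ ≤ q * Real.sqrt (2 * q * ε) := by
          apply mul_le_mul hb hN2 (NW_nonneg W d₂) (le_of_lt hq0)
  have hNtot : NW W (m • d₁ + n • d₂) ≤ 2 * q * Real.sqrt (2 * q * ε) := by
    calc NW W (m • d₁ + n • d₂) ≤ NW W (a • d₁) + NW W (b • d₂) := hsplit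
      _ ≤ 2 * q * Real.sqrt (2 * q * ε) := by linarith
  have hsq : NW W (m • d₁ + n • d₂) ^ 2 ≤ 8 * q ^ 3 * ε := by
    have hrhs : (2 * q * Real.sqrt (2 * q * ε)) ^ 2 = 8 * q ^ 3 * ε := by
      rw [mul_pow, mul_pow, Real.sq_sqrt (by positivity)]
      ring
    calc NW W (m • d₁ + n • d₂) ^ 2 ≤ (2 * q * Real.sqrt (2 * q * ε)) ^ 2 := by
          apply pow_le_pow_left₀ (NW_nonneg W _) hNtot
      _ = 8 * q ^ 3 * ε := hrhs
  have hrel := NW_sq W hW0 hW1 (m • d₁ + n • d₂)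
  -- conclude
  have hq23 : q ^ 2 ≤ q ^ 3 := by nlinarith
  have : 2 * q * (1 - Zd W (m • d₁ + n • d₂)) ≤ 8 * q ^ 3 * ε := by
    rw [← hrel]; exact hsq
  have h4 : 1 - Zd W (m • d₁ + n • d₂) ≤ 4 * q ^ 2 * ε := by
    have h2q : (0 : ℝ) < 2 * q := by linarith
    nlinarith
  have : 4 * q ^ 2 * ε ≤ 4 * q ^ 3 * ε := by nlinarith
  linarith
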